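/- Let G be a group with the HL-property. Then G is residually finite. -/
import Mathlib


open scoped Pointwise

/-- An equation of a left system on subgroups indexed by `Fin n`, with variables
indexed by `Fin m`: either `xᵢ Hⱼ = c Hⱼ` (when `r = none`) or
`xᵢ Hⱼ = x_r c Hⱼ` (when `r = some r`). -/
structure LeftEqn (G : Type*) (m n : ℕ) where
  i : Fin m
  j : Fin n
  c : G
  r : Option (Fin m)

/-- The equation `e` holds for the assignment `x` of variables, relative to the family
of subgroups `K`. -/
def EqnHolds {G : Type*} [Group G] {m n : ℕ} (K : Fin n → Subgroup G)
    (x : Fin m → G) (e : LeftEqn G m n) : Prop :=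
  match e.r with
  | none => x e.i • ((K e.j : Set G)) = e.c • ((K e.j : Set G))
  | some r => x e.i • ((K e.j : Set G)) = (x r * e.c) • ((K e.j : Set G))

/-- A left system of equations has a solution relative to the subgroups `K`. -/
def Solvable {G : Type*} [Group G] {m n : ℕ} (K : Fin n → Subgroup G)
    (S : List (LeftEqn G m n)) : Prop :=
  ∃ x : Fin m → G, ∀ e ∈ S, EqnHolds K x e

/-- The HL-property: every left system on finitely generated subgroups `H₁,…,Hₙ` that has
no solution remains unsolvable after enlarging each `Hⱼ` to `NⱼHⱼ` for suitable
finite-index normal subgroups `Nⱼ`. -/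
def HLProperty (G : Type*) [Group G] : Prop :=
  ∀ (m n : ℕ) (H : Fin n → Subgroup G), (∀ j, (H j).FG) →
    ∀ S : List (LeftEqn G m n), ¬ Solvable H S →
      ∃ N K : Fin n → Subgroup G,
        (∀ j, (N j).Normal ∧ (N j).FiniteIndex ∧
          ((K j : Set G) = (N j : Set G) * (H j : Set G))) ∧
        ¬ Solvable K S

/-- A group with the HL-property is residually finite. -/
theorem stmt10 {G : Type*} [Group G] (hHL : HLProperty G) :
    ∀ g : G, g ≠ 1 → ∃ N : Subgroup G, N.Normal ∧ N.FiniteIndex ∧ g ∉ N := by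
  intro g hg
  set S : List (LeftEqn G 1 1) := [⟨0, 0, g, none⟩, ⟨0, 0, 1, none⟩] with hS
  have hns : ¬ Solvable (fun _ : Fin 1 => (⊥ : Subgroup G)) S := by
    rintro ⟨x, hx⟩
    have h1 := hx ⟨0, 0, g, none⟩ (by simp [hS])
    have h2 := hx ⟨0, 0, 1, none⟩ (by simp [hS])
    simp only [EqnHolds] at h1 h2
    rw [leftCoset_eq_iff] at h1 h2
    simp only [Subgroup.mem_bot] at h1 h2
    apply hg
    have hx0 : x 0 = 1 := by
      have := h2
      rw [mul_one, inv_eq_one] at this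
      exact this
    rw [hx0, inv_one, one_mul] at h1
    exact h1
  obtain ⟨N, K, hNK, hK⟩ := hHL 1 1 (fun _ => ⊥) (fun _ => ⟨∅, by simp⟩) S hns
  obtain ⟨hnorm, hfi, hcarr⟩ := hNK 0
  refine ⟨N 0, hnorm, hfi, fun hgN => ?_⟩
  apply hK
  have hKN : (K 0 : Set G) = (N 0 : Set G) := by
    rw [hcarr, Subgroup.coe_bot]
    simp
  refine ⟨fun _ => g, ?_⟩
  intro e he
  simp only [hS, List.mem_cons, List.not_mem_nil, or_false] at he
  rcases he with rfl | rfl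
  · simp [EqnHolds]
  · simp only [EqnHolds]
    rw [leftCoset_eq_iff, mul_one]
    have hgK : g ∈ K 0 := by rw [← SetLike.mem_coe, hKN]; exact hgN
    exact (K 0).inv_mem hgK
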